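/- arXiv:1805.01726 — 2 statements merged into one kernel-verified Lean document; each statement's English description precedes it below -/
import Mathlib

section
/- Let t₁, t₂ be positive integers and n ≥ 0, k ≥ 1 integers. Let F_n = (P,Q) be a quasi-homogeneous polynomial vector field of type t = (t₁,t₂) and degree n over ℂ which is irreducible, i.e. P and Q have no nonconstant common factor. Let f ∈ ℂ[x,y] be an irreducible polynomial with f(0,0) = 0 which is an invariant curve of F_n (∇f·F_n = K·f for some polynomial K). If p ∈ ℂ[x,y] is quasi-homogeneous of type t and degree k ≥ 1 and f divides ∇p·F_n, then f divides p. -/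
open MvPolynomial

/-- A polynomial in two variables is quasi-homogeneous of type `(t₁,t₂)` and
degree `k` if every monomial `x^a y^b` occurring in it satisfies `t₁a + t₂b = k`. -/
def IsQH (t₁ t₂ k : ℕ) (p : MvPolynomial (Fin 2) ℂ) : Prop :=
  ∀ m ∈ p.support, t₁ * m 0 + t₂ * m 1 = k

/-- `∇f · (P,Q)` for a planar polynomial vector field `(P,Q)`. -/
noncomputable def gradDot (f P Q : MvPolynomial (Fin 2) ℂ) : MvPolynomial (Fin 2) ℂ :=
  pderiv 0 f * P + pderiv 1 f * Q

set_option maxHeartbeats 1000000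
set_option synthInstance.maxHeartbeats 400000

namespace QHAux

lemma sub_single_eq_iff {m m₀ : Fin 2 →₀ ℕ} {i : Fin 2} (hm : m i ≠ 0) (hm₀ : m₀ i ≠ 0) :
    m - Finsupp.single i 1 = m₀ - Finsupp.single i 1 ↔ m = m₀ := by
  constructor
  · intro h
    ext j
    have h2 := DFunLike.congr_fun h j
    simp only [Finsupp.tsub_apply, Finsupp.single_apply] at h2
    rcases eq_or_ne i j with rfl | hij
    · simp only [if_true, eq_self_iff_true] at h2
      omega
    · simpa [hij] using h2
  · rintro rfl; rfl

lemma pderiv_apply_sum (i : Fin 2) (g : MvPolynomial (Fin 2) ℂ) :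
    pderiv i g = ∑ m ∈ g.support,
      monomial (m - Finsupp.single i 1) (coeff m g * (m i : ℂ)) := by
  conv_lhs => rw [g.as_sum]
  rw [map_sum]
  exact Finset.sum_congr rfl fun m _ => by rw [pderiv_monomial]

lemma support_pderiv_subset (i : Fin 2) (g : MvPolynomial (Fin 2) ℂ) :
    (pderiv i g).support ⊆
      (g.support.filter (fun m => m i ≠ 0)).image (fun m => m - Finsupp.single i 1) := by
  classical
  rw [pderiv_apply_sum]
  intro m' hm'
  obtain ⟨m, hm, hmem⟩ := Finset.mem_biUnion.mp (MvPolynomial.support_sum hm')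
  have hco : coeff m g * (m i : ℂ) ≠ 0 := by
    intro h0
    rw [h0] at hmem
    simp at hmem
  have hmi : m i ≠ 0 := fun h => hco (by simp [h])
  have := support_monomial_subset hmem
  simp only [Finset.mem_singleton] at this
  exact Finset.mem_image.mpr ⟨m, Finset.mem_filter.mpr ⟨hm, hmi⟩, this.symm⟩

lemma support_zero_of_pderiv_eq_zero {i : Fin 2} {g : MvPolynomial (Fin 2) ℂ}
    (h : pderiv i g = 0) : ∀ m ∈ g.support, m i = 0 := by
  intro m₀ hm₀
  by_contra hne
  have hco : coeff (m₀ - Finsupp.single i 1) (pderiv i g) = coeff m₀ g * (m₀ i : ℂ) := by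
    rw [pderiv_apply_sum]
    rw [MvPolynomial.coeff_sum]
    rw [Finset.sum_eq_single m₀]
    · rw [coeff_monomial, if_pos rfl]
    · intro m hm hmne
      rw [coeff_monomial]
      rcases eq_or_ne (m i) 0 with hz | hz
      · simp [hz]
      · rw [if_neg]
        intro he
        exact hmne ((sub_single_eq_iff hz hne).mp he)
    · intro h'; exact absurd hm₀ h'
  rw [h] at hco
  simp only [coeff_zero] at hco
  have : coeff m₀ g ≠ 0 := mem_support_iff.mp hm₀
  have : (m₀ i : ℂ) ≠ 0 := Nat.cast_ne_zero.mpr hne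
  exact ‹coeff m₀ g ≠ 0› (by
    rcases mul_eq_zero.mp hco.symm with h | h
    · exact h
    · exact absurd h ‹(m₀ i : ℂ) ≠ 0›)

lemma pderiv_eq_zero_of_support {i : Fin 2} {g : MvPolynomial (Fin 2) ℂ}
    (h : ∀ m ∈ g.support, m i = 0) : pderiv i g = 0 := by
  rw [pderiv_apply_sum]
  apply Finset.sum_eq_zero
  intro m hm
  rw [h m hm]
  simp


lemma eq_C_of_pderiv_eq_zero {g : MvPolynomial (Fin 2) ℂ}
    (h0 : pderiv 0 g = 0) (h1 : pderiv 1 g = 0) : g = C (coeff 0 g) := by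
  have hs : ∀ m ∈ g.support, m = 0 := by
    intro m hm
    ext j
    fin_cases j
    · exact support_zero_of_pderiv_eq_zero h0 m hm
    · exact support_zero_of_pderiv_eq_zero h1 m hm
  ext m
  rcases eq_or_ne m 0 with rfl | hne
  · simp [coeff_C]
  · rw [coeff_C, if_neg (Ne.symm hne)]
    by_contra hc
    exact hne (hs m (mem_support_iff.mpr hc))

lemma pderiv_zero_pderiv_one {g : MvPolynomial (Fin 2) ℂ} (h : pderiv 0 g = 0) :
    pderiv 0 (pderiv 1 g) = 0 := by
  apply pderiv_eq_zero_of_support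
  intro m' hm'
  obtain ⟨m, hm, rfl⟩ := Finset.mem_image.mp (support_pderiv_subset 1 g hm')
  have := support_zero_of_pderiv_eq_zero h m (Finset.mem_filter.mp hm).1
  simp [Finsupp.tsub_apply, Finsupp.single_apply, this]

lemma totalDegree_pderiv_lt {g : MvPolynomial (Fin 2) ℂ} {i : Fin 2}
    (h : pderiv i g ≠ 0) : (pderiv i g).totalDegree < g.totalDegree := by
  classical
  have hkey : ∀ m' ∈ (pderiv i g).support, (m'.sum fun _ e => e) < g.totalDegree := by
    intro m' hm'
    obtain ⟨m, hmf, rfl⟩ := Finset.mem_image.mp (support_pderiv_subset i g hm')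
    obtain ⟨hm, hmi⟩ := Finset.mem_filter.mp hmf
    have heq : (m - Finsupp.single i 1) + Finsupp.single i 1 = m := by
      ext j
      simp only [Finsupp.add_apply, Finsupp.tsub_apply, Finsupp.single_apply]
      rcases eq_or_ne i j with rfl | hij
      · simp only [if_true, eq_self_iff_true]
        omega
      · simp [hij]
    have hsum : ((m - Finsupp.single i 1).sum fun _ e => e) + 1 = m.sum fun _ e => e := by
      conv_rhs => rw [← heq]
      rw [Finsupp.sum_add_index' (fun _ => rfl) (fun _ _ _ => rfl)]
      rw [Finsupp.sum_single_index rfl]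
    have := le_totalDegree hm
    omega
  rcases Finset.eq_empty_or_nonempty (pderiv i g).support with he | ⟨m', hm'⟩
  · exact absurd (support_eq_empty.mp he) h
  · have hbot : (⊥ : ℕ) < g.totalDegree := lt_of_le_of_lt (Nat.zero_le _) (hkey m' hm')
    exact (Finset.sup_lt_iff hbot).mpr hkey
  

noncomputable def φ : MvPolynomial (Fin 2) ℂ ≃ₐ[ℂ] Polynomial (MvPolynomial (Fin 1) ℂ) :=
  MvPolynomial.finSuccEquiv ℂ 1

lemma phi_pderiv (g : MvPolynomial (Fin 2) ℂ) :
    φ (pderiv 0 g) = Polynomial.derivative (φ g) := by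
  induction g using MvPolynomial.induction_on with
  | C a =>
      have : φ (C a) = Polynomial.C (C a) := by
        simp [φ, finSuccEquiv_apply]
      simp [this]
  | add p q hp hq => simp [map_add, hp, hq]
  | mul_X p i hp =>
      rw [pderiv_mul, map_add, map_mul, map_mul, hp, map_mul]
      rcases Fin.cases (motive := fun j => j = 0 ∨ j = (0 : Fin 1).succ) (Or.inl rfl)
        (fun j => Or.inr (by fin_cases j; rfl)) i with h | h
      · subst h
        rw [pderiv_X_self]
        show _ = Polynomial.derivative (φ p * φ (X 0))
        rw [show φ (X 0) = Polynomial.X from finSuccEquiv_X_zero]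
        simp [Polynomial.derivative_mul]
      · subst h
        rw [show φ (X (0 : Fin 1).succ) = Polynomial.C (X 0) from finSuccEquiv_X_succ]
        rw [pderiv_X_of_ne (by simp [Fin.ext_iff])]
        simp [Polynomial.derivative_mul]

lemma not_dvd_pderiv0 (f : MvPolynomial (Fin 2) ℂ) (h : pderiv 0 f ≠ 0) :
    ¬ f ∣ pderiv 0 f := by
  intro hdvd
  have hdvd' : φ f ∣ Polynomial.derivative (φ f) := by
    rw [← phi_pderiv]
    exact map_dvd φ.toAlgHom hdvd  -- hope this works
  have hder0 : Polynomial.derivative (φ f) ≠ 0 := by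
    rw [← phi_pderiv]
    simpa using h
  have hnd : (φ f).natDegree ≠ 0 := by
    intro h0
    obtain ⟨a, ha⟩ := Polynomial.natDegree_eq_zero.mp h0
    rw [← ha] at hder0
    simp at hder0
  have h1 := Polynomial.natDegree_le_of_dvd hdvd' hder0
  have h2 := Polynomial.natDegree_derivative_lt hnd
  omega


lemma dep_mod {K : Type*} [Field K] (F : Polynomial K) (hF : F ≠ 0) (Pk : Polynomial K) :
    ∃ g : Fin (F.natDegree + 1) → K, (∃ i, g i ≠ 0) ∧
      F ∣ ∑ i, Polynomial.C (g i) * Pk ^ (i : ℕ) := by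
  classical
  set m : ℕ := F.natDegree with hm
  set F' : Polynomial K := F * Polynomial.C (F.leadingCoeff)⁻¹ with hF'
  have hmonic : F'.Monic := Polynomial.monic_mul_leadingCoeff_inv hF
  have hdegF' : F'.degree = (m : WithBot ℕ) := by
    rw [hF', Polynomial.degree_mul_C (inv_ne_zero (Polynomial.leadingCoeff_ne_zero.mpr hF)),
      Polynomial.degree_eq_natDegree hF]
  set w : Fin (m+1) → Polynomial.degreeLT K m := fun i =>
    ⟨(Pk ^ (i:ℕ)) %ₘ F', Polynomial.mem_degreeLT.mpr
      (hdegF' ▸ Polynomial.degree_modByMonic_lt _ hmonic)⟩ with hw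
  have hdep : ¬ LinearIndependent K w := by
    intro hli
    haveI hfd : Module.Finite K (Polynomial.degreeLT K m) :=
      Module.Finite.equiv (Polynomial.degreeLTEquiv K m).symm
    have hcard := hli.fintype_card_le_finrank
    rw [(Polynomial.degreeLTEquiv K m).finrank_eq, Module.finrank_fin_fun] at hcard
    simp [Fintype.card_fin] at hcard
  obtain ⟨g, hgsum, i0, hgi0⟩ := Fintype.not_linearIndependent_iff.mp hdep
  refine ⟨g, ⟨i0, hgi0⟩, ?_⟩
  have hWmod : (∑ i, Polynomial.C (g i) * Pk ^ (i:ℕ)) %ₘ F' = 0 := by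
    have h1 : (∑ i, Polynomial.C (g i) * Pk ^ (i:ℕ)) = ∑ i, g i • Pk ^ (i:ℕ) := by
      simp [Polynomial.smul_eq_C_mul]
    rw [h1, ← Polynomial.modByMonicHom_apply, map_sum]
    have h2 : ∀ i : Fin (m+1), Polynomial.modByMonicHom F' (g i • Pk ^ (i:ℕ))
        = g i • ((Pk ^ (i:ℕ)) %ₘ F') := by
      intro i; rw [map_smul, Polynomial.modByMonicHom_apply]
    rw [Finset.sum_congr rfl (fun i _ => h2 i)]
    have h3 := congrArg (Submodule.subtype (Polynomial.degreeLT K m)) hgsum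
    simpa using h3
  have hWdvd : F' ∣ ∑ i, Polynomial.C (g i) * Pk ^ (i:ℕ) :=
    (Polynomial.modByMonic_eq_zero_iff_dvd hmonic).mp hWmod
  exact dvd_trans (dvd_mul_right _ _) hWdvd


lemma pderiv0_phi_symm_C (c : MvPolynomial (Fin 1) ℂ) :
    pderiv 0 (φ.symm (Polynomial.C c)) = 0 := by
  apply φ.injective
  rw [phi_pderiv, map_zero, AlgEquiv.apply_symm_apply]
  simp

lemma exists_relation (f p : MvPolynomial (Fin 2) ℂ) (hf : f ≠ 0) :
    ∃ (M : ℕ) (a : Fin M → MvPolynomial (Fin 2) ℂ),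
      (∀ i, pderiv 0 (a i) = 0) ∧ (∃ i, a i ≠ 0) ∧ f ∣ ∑ i, a i * p ^ (i : ℕ) := by
  classical
  have hinj : Function.Injective (algebraMap (MvPolynomial (Fin 1) ℂ) (FractionRing (MvPolynomial (Fin 1) ℂ))) :=
    IsFractionRing.injective (MvPolynomial (Fin 1) ℂ) (FractionRing (MvPolynomial (Fin 1) ℂ))
  set F : Polynomial (MvPolynomial (Fin 1) ℂ) := φ f with hF
  have hFne : F ≠ 0 := by
    simp only [hF]
    exact (map_ne_zero_iff φ φ.injective).mpr hf
  set Fk : Polynomial (FractionRing (MvPolynomial (Fin 1) ℂ)) := F.map (algebraMap (MvPolynomial (Fin 1) ℂ) (FractionRing (MvPolynomial (Fin 1) ℂ))) with hFkdef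
  have hFkne : Fk ≠ 0 := by
    rw [hFkdef]
    exact (Polynomial.map_ne_zero_iff hinj).mpr hFne
  set Pk : Polynomial (FractionRing (MvPolynomial (Fin 1) ℂ)) := (φ p).map (algebraMap (MvPolynomial (Fin 1) ℂ) (FractionRing (MvPolynomial (Fin 1) ℂ))) with hPk
  obtain ⟨g, ⟨i0, hgi0⟩, hFkW⟩ := dep_mod Fk hFkne Pk
  obtain ⟨b, hb⟩ := IsLocalization.exist_integer_multiples
    (nonZeroDivisors (MvPolynomial (Fin 1) ℂ)) Finset.univ g
  choose A hA using fun i : Fin (Fk.natDegree + 1) => hb i (Finset.mem_univ i)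
  set W2 : Polynomial (MvPolynomial (Fin 1) ℂ) := ∑ i, Polynomial.C (A i) * (φ p) ^ (i:ℕ) with hW2
  have hbne : (b : (MvPolynomial (Fin 1) ℂ)) ≠ 0 := nonZeroDivisors.ne_zero b.2
  have hmap : W2.map (algebraMap (MvPolynomial (Fin 1) ℂ) (FractionRing (MvPolynomial (Fin 1) ℂ)))
      = Polynomial.C (algebraMap (MvPolynomial (Fin 1) ℂ) (FractionRing (MvPolynomial (Fin 1) ℂ)) (b : (MvPolynomial (Fin 1) ℂ))) * ∑ i, Polynomial.C (g i) * Pk ^ (i:ℕ) := by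
    rw [hW2, Polynomial.map_sum, Finset.mul_sum]
    apply Finset.sum_congr rfl
    intro i _
    rw [Polynomial.map_mul, Polynomial.map_pow, Polynomial.map_C, hA i, Algebra.smul_def,
      map_mul, ← hPk]
    ring
  have h5 : Fk ∣ W2.map (algebraMap (MvPolynomial (Fin 1) ℂ) (FractionRing (MvPolynomial (Fin 1) ℂ))) := by
    rw [hmap]; exact hFkW.mul_left _
  obtain ⟨h', hh'⟩ := h5
  obtain ⟨b2, hb2⟩ := IsLocalization.integerNormalization_map_to_map
    (nonZeroDivisors (MvPolynomial (Fin 1) ℂ)) h'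
  set N := IsLocalization.integerNormalization (nonZeroDivisors (MvPolynomial (Fin 1) ℂ)) h'
    with hN
  have hb2ne : (b2 : (MvPolynomial (Fin 1) ℂ)) ≠ 0 := nonZeroDivisors.ne_zero b2.2
  have hkey : Polynomial.C (b2 : (MvPolynomial (Fin 1) ℂ)) * W2 = F * N := by
    apply Polynomial.map_injective _ hinj
    rw [Polynomial.map_mul, Polynomial.map_mul, hb2, hh', Polynomial.map_C]
    rw [show ((b2 : (MvPolynomial (Fin 1) ℂ)) • h') = Polynomial.C (algebraMap (MvPolynomial (Fin 1) ℂ) (FractionRing (MvPolynomial (Fin 1) ℂ)) (b2 : (MvPolynomial (Fin 1) ℂ))) * h' by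
      rw [← IsScalarTower.algebraMap_smul (FractionRing (MvPolynomial (Fin 1) ℂ)) ((b2 : (MvPolynomial (Fin 1) ℂ))) h', Polynomial.smul_eq_C_mul]]
    ring
  refine ⟨Fk.natDegree + 1, fun i => φ.symm (Polynomial.C ((b2 : (MvPolynomial (Fin 1) ℂ)) * A i)), fun i => pderiv0_phi_symm_C _,
    ⟨i0, ?_⟩, ?_⟩
  · have hAine : A i0 ≠ 0 := by
      intro h0
      have h6 := hA i0
      rw [h0, map_zero, Algebra.smul_def] at h6
      rcases mul_eq_zero.mp h6.symm with h | h
      · exact hbne (hinj (by simpa using h))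
      · exact hgi0 h
    intro h0
    have h7 : Polynomial.C ((b2 : (MvPolynomial (Fin 1) ℂ)) * A i0) = (0 : Polynomial (MvPolynomial (Fin 1) ℂ)) := by
      apply φ.symm.injective; simpa using h0
    rw [Polynomial.C_eq_zero] at h7
    exact (mul_ne_zero hb2ne hAine) h7
  · have hsum : φ (∑ i : Fin (Fk.natDegree + 1), φ.symm (Polynomial.C ((b2 : (MvPolynomial (Fin 1) ℂ)) * A i)) * p ^ (i:ℕ))
        = Polynomial.C (b2 : (MvPolynomial (Fin 1) ℂ)) * W2 := by
      rw [map_sum, hW2, Finset.mul_sum]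
      apply Finset.sum_congr rfl
      intro i _
      rw [map_mul, map_pow, AlgEquiv.apply_symm_apply, Polynomial.C_mul]
      ring
    have hdvd : F ∣ Polynomial.C (b2 : (MvPolynomial (Fin 1) ℂ)) * W2 := ⟨N, hkey⟩
    have h8 := map_dvd φ.symm.toAlgHom hdvd
    change φ.symm F ∣ φ.symm (Polynomial.C (b2 : (MvPolynomial (Fin 1) ℂ)) * W2) at h8
    rw [← hsum] at h8
    rw [show φ.symm F = f by rw [hF]; exact φ.symm_apply_apply f] at h8
    rwa [AlgEquiv.symm_apply_apply] at h8


lemma const_case (f p : MvPolynomial (Fin 2) ℂ) (hprime : Prime f)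
    {M : ℕ} (c : Fin M → ℂ) (hne : ∃ i, c i ≠ 0)
    (hdvd : f ∣ ∑ i, C (c i) * p ^ (i : ℕ)) :
    ∃ c0 : ℂ, f ∣ p - C c0 := by
  classical
  set u : Polynomial ℂ := ∑ i, Polynomial.C (c i) * Polynomial.X ^ (i : ℕ) with hu
  have hune : u ≠ 0 := by
    obtain ⟨i0, hi0⟩ := hne
    intro h0
    have hco : u.coeff (i0 : ℕ) = c i0 := by
      rw [hu, Polynomial.finset_sum_coeff]
      rw [Finset.sum_eq_single i0]
      · simp
      · intro i _ hii
        rw [Polynomial.coeff_C_mul, Polynomial.coeff_X_pow,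
          if_neg (fun hcon => hii ((Fin.val_injective hcon).symm)), mul_zero]
      · intro hh; exact absurd (Finset.mem_univ i0) hh
    rw [h0] at hco
    simp only [Polynomial.coeff_zero] at hco
    exact hi0 hco.symm
  have haeval : Polynomial.aeval p u = ∑ i, C (c i) * p ^ (i : ℕ) := by
    rw [hu, map_sum]
    apply Finset.sum_congr rfl
    intro i _
    rw [map_mul, map_pow, Polynomial.aeval_C, Polynomial.aeval_X, MvPolynomial.algebraMap_eq]
  have hsplit : u.Splits := IsAlgClosed.splits u
  have hfact := hsplit.eq_prod_roots
  have hprod : Polynomial.aeval p u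
      = C u.leadingCoeff * ((u.roots.map fun a => p - C a)).prod := by
    conv_lhs => rw [hfact]
    rw [map_mul, Polynomial.aeval_C, MvPolynomial.algebraMap_eq, map_multiset_prod]
    rw [Multiset.map_map]
    congr 1
    congr 1
    apply Multiset.map_congr rfl
    intro a _
    simp [Polynomial.aeval_X, Polynomial.aeval_C, MvPolynomial.algebraMap_eq]
  have hdvd2 : f ∣ C u.leadingCoeff * ((u.roots.map fun a => p - C a)).prod := by
    rw [← hprod, haeval]; exact hdvd
  have hlcu : IsUnit (C u.leadingCoeff : MvPolynomial (Fin 2) ℂ) := by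
    apply IsUnit.map
    exact isUnit_iff_ne_zero.mpr (Polynomial.leadingCoeff_ne_zero.mpr hune)
  rcases hprime.dvd_or_dvd hdvd2 with h | h
  · exact absurd (isUnit_of_dvd_unit h hlcu) hprime.not_unit
  · obtain ⟨q, hq, hfq⟩ := hprime.exists_mem_multiset_dvd h
    obtain ⟨a, _, rfl⟩ := Multiset.mem_map.mp hq
    exact ⟨a, hfq⟩

lemma step_div (f p : MvPolynomial (Fin 2) ℂ) (hprime : Prime f)
    (hndvd : ¬ f ∣ pderiv 0 f)
    (hJ : f ∣ pderiv 0 p * pderiv 1 f - pderiv 1 p * pderiv 0 f)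
    {M : ℕ} (a : Fin M → MvPolynomial (Fin 2) ℂ) (h0 : ∀ i, pderiv 0 (a i) = 0)
    (hdvd : f ∣ ∑ i, a i * p ^ (i : ℕ)) :
    f ∣ ∑ i, pderiv 1 (a i) * p ^ (i : ℕ) := by
  classical
  obtain ⟨h, hh⟩ := hdvd
  obtain ⟨w, hw⟩ := hJ
  have e1 : (∑ i, a i * ((i : ℕ) * p ^ ((i : ℕ) - 1))) * pderiv 0 p
      = pderiv 0 f * h + f * pderiv 0 h := by
    rw [← pderiv_mul, ← hh, map_sum, Finset.sum_mul]
    apply Finset.sum_congr rfl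
    intro i _
    rw [pderiv_mul, pderiv_pow, h0 i]
    ring
  have e2 : (∑ i, pderiv 1 (a i) * p ^ (i : ℕ))
        + (∑ i, a i * ((i : ℕ) * p ^ ((i : ℕ) - 1))) * pderiv 1 p
      = pderiv 1 f * h + f * pderiv 1 h := by
    rw [← pderiv_mul, ← hh, map_sum, Finset.sum_mul, ← Finset.sum_add_distrib]
    apply Finset.sum_congr rfl
    intro i _
    rw [pderiv_mul, pderiv_pow]
    ring
  have key : (∑ i, pderiv 1 (a i) * p ^ (i : ℕ)) * pderiv 0 f
      = f * ((∑ i, a i * ((i : ℕ) * p ^ ((i : ℕ) - 1))) * w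
          - (pderiv 0 h * pderiv 1 f - pderiv 1 h * pderiv 0 f)) := by
    have hw' : pderiv 0 p * pderiv 1 f - pderiv 1 p * pderiv 0 f = f * w := hw
    linear_combination (pderiv 0 f) * e2 - (pderiv 1 f) * e1
      + (∑ i, a i * ((i : ℕ) * p ^ ((i : ℕ) - 1))) * hw'
  have hdvd2 : f ∣ (∑ i, pderiv 1 (a i) * p ^ (i : ℕ)) * pderiv 0 f := ⟨_, key⟩
  rcases hprime.dvd_or_dvd hdvd2 with hna | hna
  · exact hna
  · exact absurd hna hndvd

lemma orientation (f p : MvPolynomial (Fin 2) ℂ) (hprime : Prime f)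
    (hfx : pderiv 0 f ≠ 0)
    (hJ : f ∣ pderiv 0 p * pderiv 1 f - pderiv 1 p * pderiv 0 f) :
    ∃ c : ℂ, f ∣ p - C c := by
  classical
  have hndvd := not_dvd_pderiv0 f hfx
  obtain ⟨M, a, h0, hne, hdvd⟩ := exists_relation f p hprime.ne_zero
  suffices H : ∀ (n M : ℕ) (a : Fin M → MvPolynomial (Fin 2) ℂ),
      (∑ i, (a i).totalDegree) ≤ n → (∀ i, pderiv 0 (a i) = 0) → (∃ i, a i ≠ 0) →
      f ∣ ∑ i, a i * p ^ (i : ℕ) → ∃ c : ℂ, f ∣ p - C c by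
    exact H _ M a le_rfl h0 hne hdvd
  intro n
  induction n with
  | zero =>
      intro M a hdeg h0 hne hdvd
      by_cases hall : ∀ i, pderiv 1 (a i) = 0
      · obtain ⟨i0, hi0⟩ := hne
        apply const_case f p hprime (fun i => coeff 0 (a i))
        · exact ⟨i0, fun hc => hi0 (by rw [eq_C_of_pderiv_eq_zero (h0 i0) (hall i0), hc, map_zero])⟩
        · have : ∀ i, a i = C (coeff 0 (a i)) := fun i => eq_C_of_pderiv_eq_zero (h0 i) (hall i)
          rw [show (∑ i, C (coeff 0 (a i)) * p ^ (i:ℕ)) = ∑ i, a i * p ^ (i:ℕ) from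
            Finset.sum_congr rfl (fun i _ => by rw [← this i])]
          exact hdvd
      · push_neg at hall
        obtain ⟨i1, hi1⟩ := hall
        have hstrict : (pderiv 1 (a i1)).totalDegree < (a i1).totalDegree :=
          totalDegree_pderiv_lt hi1
        have hsum : ∑ i, (pderiv 1 (a i)).totalDegree < ∑ i, (a i).totalDegree := by
          apply Finset.sum_lt_sum (fun i _ => ?_) ⟨i1, Finset.mem_univ i1, hstrict⟩
          rcases eq_or_ne (pderiv 1 (a i)) 0 with hz | hz
          · rw [hz]; simp
          · exact (totalDegree_pderiv_lt hz).le
        omega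
  | succ n ih =>
      intro M a hdeg h0 hne hdvd
      by_cases hall : ∀ i, pderiv 1 (a i) = 0
      · obtain ⟨i0, hi0⟩ := hne
        apply const_case f p hprime (fun i => coeff 0 (a i))
        · exact ⟨i0, fun hc => hi0 (by rw [eq_C_of_pderiv_eq_zero (h0 i0) (hall i0), hc, map_zero])⟩
        · have : ∀ i, a i = C (coeff 0 (a i)) := fun i => eq_C_of_pderiv_eq_zero (h0 i) (hall i)
          rw [show (∑ i, C (coeff 0 (a i)) * p ^ (i:ℕ)) = ∑ i, a i * p ^ (i:ℕ) from
            Finset.sum_congr rfl (fun i _ => by rw [← this i])]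
          exact hdvd
      · push_neg at hall
        obtain ⟨i1, hi1⟩ := hall
        have hstrict : (pderiv 1 (a i1)).totalDegree < (a i1).totalDegree :=
          totalDegree_pderiv_lt hi1
        have hsum : ∑ i, (pderiv 1 (a i)).totalDegree < ∑ i, (a i).totalDegree := by
          apply Finset.sum_lt_sum (fun i _ => ?_) ⟨i1, Finset.mem_univ i1, hstrict⟩
          rcases eq_or_ne (pderiv 1 (a i)) 0 with hz | hz
          · rw [hz]; simp
          · exact (totalDegree_pderiv_lt hz).le
        exact ih M (fun i => pderiv 1 (a i))
          (Nat.lt_succ_iff.mp (lt_of_lt_of_le hsum hdeg))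
          (fun i => pderiv_zero_pderiv_one (h0 i)) ⟨i1, hi1⟩
          (step_div f p hprime hndvd hJ a h0 hdvd)


lemma main_div (f p : MvPolynomial (Fin 2) ℂ) (hfirr : Irreducible f)
    (hJ : f ∣ pderiv 0 p * pderiv 1 f - pderiv 1 p * pderiv 0 f)
    (hf0 : constantCoeff f = 0) (hp0 : constantCoeff p = 0) : f ∣ p := by
  classical
  have hprime : Prime f := UniqueFactorizationMonoid.irreducible_iff_prime.mp hfirr
  have hc : ∃ c : ℂ, f ∣ p - C c := by
    by_cases hfx : pderiv 0 f ≠ 0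
    · exact orientation f p hprime hfx hJ
    · by_cases hfy : pderiv 1 f ≠ 0
      · -- swap variables
        set e : Equiv (Fin 2) (Fin 2) := Equiv.swap 0 1 with he
        have hee : (⇑e ∘ ⇑e) = id := funext fun x => Equiv.swap_apply_self 0 1 x
        have he1 : e 1 = 0 := Equiv.swap_apply_right 0 1
        have he0 : e 0 = 1 := Equiv.swap_apply_left 0 1
        have hrinj : Function.Injective (rename (R := ℂ) (⇑e)) :=
          rename_injective _ e.injective
        have hprime' : Prime (rename (⇑e) f) := by
          have := (MulEquiv.prime_iff (renameEquiv ℂ e).toMulEquiv).mpr hprime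
          simpa using this
        have rf0 : pderiv 0 (rename (⇑e) f) = rename (⇑e) (pderiv 1 f) := by
          rw [← he1]; exact pderiv_rename e.injective 1 f
        have rf1 : pderiv 1 (rename (⇑e) f) = rename (⇑e) (pderiv 0 f) := by
          rw [← he0]; exact pderiv_rename e.injective 0 f
        have rp0 : pderiv 0 (rename (⇑e) p) = rename (⇑e) (pderiv 1 p) := by
          rw [← he1]; exact pderiv_rename e.injective 1 p
        have rp1 : pderiv 1 (rename (⇑e) p) = rename (⇑e) (pderiv 0 p) := by
          rw [← he0]; exact pderiv_rename e.injective 0 p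
        have hfx' : pderiv 0 (rename (⇑e) f) ≠ 0 := by
          rw [rf0]
          intro hcon
          exact hfy (hrinj (by simpa using hcon))
        have hJ0 : f ∣ pderiv 1 p * pderiv 0 f - pderiv 0 p * pderiv 1 f := by
          have := dvd_neg.mpr hJ
          rwa [neg_sub] at this
        have hJ' : rename (⇑e) f ∣ pderiv 0 (rename (⇑e) p) * pderiv 1 (rename (⇑e) f)
            - pderiv 1 (rename (⇑e) p) * pderiv 0 (rename (⇑e) f) := by
          rw [rf0, rf1, rp0, rp1, ← map_mul, ← map_mul, ← map_sub]
          exact map_dvd (rename (⇑e)) hJ0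
        obtain ⟨c, hc⟩ := orientation _ _ hprime' hfx' hJ'
        refine ⟨c, ?_⟩
        have h2 := map_dvd (rename (⇑e)) hc
        rw [map_sub, rename_C, rename_rename, rename_rename, hee, rename_id, AlgHom.id_apply, AlgHom.id_apply] at h2
        exact h2
      · exfalso
        have hcc := eq_C_of_pderiv_eq_zero (not_not.mp hfx) (not_not.mp hfy)
        rw [show coeff 0 f = constantCoeff f from rfl, hf0, map_zero] at hcc
        exact hprime.ne_zero hcc
  obtain ⟨c, h, hh⟩ := hc
  have hcc := congrArg constantCoeff hh
  rw [map_sub, map_mul, hf0, zero_mul, hp0, constantCoeff_C] at hcc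
  have hc0 : c = 0 := by
    have h3 : (0 : ℂ) - c = 0 := hcc
    rwa [zero_sub, neg_eq_zero] at h3
  rw [hc0] at hh
  rw [map_zero, sub_zero] at hh
  exact ⟨h, hh⟩


end QHAux

/-- If `F_n = (P,Q)` is an irreducible quasi-homogeneous vector field, `f` an
irreducible invariant curve of `F_n`, and `f` divides `∇p·F_n` for a
quasi-homogeneous `p`, then `f` divides `p`. -/
theorem invariant_curve_divides_of_divides_gradDot
    (t₁ t₂ : ℕ) (ht₁ : 0 < t₁) (ht₂ : 0 < t₂) (n k : ℕ) (hk : 1 ≤ k)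
    (P Q : MvPolynomial (Fin 2) ℂ)
    (hP : IsQH t₁ t₂ (n + t₁) P) (hQ : IsQH t₁ t₂ (n + t₂) Q)
    (hirrF : IsRelPrime P Q)
    (f : MvPolynomial (Fin 2) ℂ) (hfirr : Irreducible f)
    (hf0 : constantCoeff f = 0)
    (hinv : ∃ K : MvPolynomial (Fin 2) ℂ, gradDot f P Q = K * f)
    (p : MvPolynomial (Fin 2) ℂ) (hp : IsQH t₁ t₂ k p)
    (hdvd : f ∣ gradDot p P Q) :
    f ∣ p := by
  classical
  have hprime : Prime f := UniqueFactorizationMonoid.irreducible_iff_prime.mp hfirr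
  obtain ⟨K, hK⟩ := hinv
  obtain ⟨L, hL⟩ := hdvd
  have hK' : pderiv 0 f * P + pderiv 1 f * Q = K * f := hK
  have hL' : pderiv 0 p * P + pderiv 1 p * Q = L * f := by
    rw [show (pderiv 0) p * P + (pderiv 1) p * Q = gradDot p P Q from rfl, hL]; ring
  -- J divisibility
  have hPJ : f ∣ P * (pderiv 0 p * pderiv 1 f - pderiv 1 p * pderiv 0 f) :=
    ⟨pderiv 1 f * L - pderiv 1 p * K, by linear_combination (pderiv 1 f) * hL' - (pderiv 1 p) * hK'⟩
  have hQJ : f ∣ Q * (pderiv 0 p * pderiv 1 f - pderiv 1 p * pderiv 0 f) :=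
    ⟨pderiv 0 p * K - pderiv 0 f * L, by linear_combination (pderiv 0 p) * hK' - (pderiv 0 f) * hL'⟩
  have hnotboth : ¬ (f ∣ P ∧ f ∣ Q) := by
    rintro ⟨h1, h2⟩
    exact hprime.not_unit (hirrF h1 h2)
  have hJ : f ∣ pderiv 0 p * pderiv 1 f - pderiv 1 p * pderiv 0 f := by
    rcases hprime.dvd_or_dvd hPJ with h | h
    · rcases hprime.dvd_or_dvd hQJ with h' | h'
      · exact absurd ⟨h, h'⟩ hnotboth
      · exact h'
    · exact h
  have hp0 : constantCoeff p = 0 := by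
    rw [show constantCoeff p = coeff 0 p from rfl]
    by_contra hcp
    have h0 : (0 : Fin 2 →₀ ℕ) ∈ p.support := mem_support_iff.mpr hcp
    have := hp 0 h0
    simp only [Finsupp.coe_zero, Pi.zero_apply, mul_zero, add_zero] at this
    omega
  exact QHAux.main_div f p hfirr hJ hf0 hp0
end

section
/- Let t₁, t₂ be positive integers, n ≥ 0, s ≥ 1, k ≥ 1 and m ≥ 1 integers. Let F_n = (P,Q) be a quasi-homogeneous polynomial vector field of type t = (t₁,t₂) and degree n over ℂ which is irreducible (P, Q have no nonconstant common factor). Let f be an irreducible quasi-homogeneous polynomial of type t and degree s which is an invariant curve of F_n with cofactor K_n (∇f·F_n = K_n·f, K_n quasi-homogeneous of degree n). Let p be quasi-homogeneous of type t and degree k. Suppose that for each j = 1, …, m−1 one has k ≠ j·s and the vector field F_n + (j/(k−j·s))·K_n·D₀ is irreducible. If f^m divides ∇p·F_n, then f^m divides p. -/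
open MvPolynomial

lemma weight_two (t₁ t₂ : ℕ) (d : Fin 2 →₀ ℕ) :
    (Finsupp.weight ![t₁, t₂]) d = t₁ * d 0 + t₂ * d 1 := by
  rw [Finsupp.weight_apply, Finsupp.sum_fintype]
  · simp [Fin.sum_univ_two, mul_comm]
  · intro i; simp

lemma isQH_iff {t₁ t₂ k : ℕ} {p : MvPolynomial (Fin 2) ℂ} :
    IsQH t₁ t₂ k p ↔ p.IsWeightedHomogeneous ![t₁, t₂] k := by
  constructor
  · intro h d hd
    rw [weight_two]; exact h d (mem_support_iff.mpr hd)
  · intro h d hd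
    rw [← weight_two t₁ t₂ d]; exact h (mem_support_iff.mp hd)
lemma euler_term (t : ℕ) (i : Fin 2) (d : Fin 2 →₀ ℕ) (c : ℂ) :
    C (t:ℂ) * X i * pderiv i (monomial d c) = C ((t * d i : ℕ) : ℂ) * monomial d c := by
  rw [pderiv_monomial]
  by_cases h : d i = 0
  · simp [h]
  · have hle : Finsupp.single i 1 ≤ d := by
      rwa [Finsupp.single_le_iff, Nat.one_le_iff_ne_zero]
    rw [X, mul_assoc, monomial_mul, add_tsub_cancel_of_le hle, C_mul_monomial, C_mul_monomial]
    congr 1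
    push_cast
    ring

lemma euler {t₁ t₂ k : ℕ} {p : MvPolynomial (Fin 2) ℂ} (hp : IsQH t₁ t₂ k p) :
    C (t₁:ℂ) * X 0 * pderiv 0 p + C (t₂:ℂ) * X 1 * pderiv 1 p = C (k:ℂ) * p := by
  conv_lhs => rw [← support_sum_monomial_coeff p]
  conv_rhs => rw [← support_sum_monomial_coeff p]
  rw [map_sum (pderiv 0), map_sum (pderiv 1), Finset.mul_sum, Finset.mul_sum, Finset.mul_sum,
    ← Finset.sum_add_distrib]
  refine Finset.sum_congr rfl fun d hd => ?_
  rw [euler_term, euler_term, ← add_mul, ← map_add C]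
  rw [← Nat.cast_add, hp d hd]
lemma isQH_pderiv {t₁ t₂ s : ℕ} {f : MvPolynomial (Fin 2) ℂ} (hf : IsQH t₁ t₂ s f) (i : Fin 2) :
    ∀ m ∈ (pderiv i f).support, t₁ * m 0 + t₂ * m 1 + ![t₁, t₂] i = s := by
  classical
  intro m hm
  have hrw : pderiv i f = ∑ d ∈ f.support, monomial (d - Finsupp.single i 1) (coeff d f * d i) := by
    conv_lhs => rw [← support_sum_monomial_coeff f]
    rw [map_sum (pderiv i)]
    exact Finset.sum_congr rfl fun d _ => pderiv_monomial
  rw [hrw] at hm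
  obtain ⟨d, hd, hmd⟩ := Finset.mem_biUnion.mp (support_sum hm)
  rw [support_monomial] at hmd
  by_cases hz : coeff d f * (d i : ℂ) = 0
  · rw [if_pos hz] at hmd; exact absurd hmd (Finset.notMem_empty m)
  rw [if_neg hz, Finset.mem_singleton] at hmd
  subst hmd
  have hdi : d i ≠ 0 := by
    intro h; apply hz; rw [h]; simp
  have hds := hf d hd
  fin_cases i
  · simp only [Finsupp.tsub_apply, Finsupp.single_apply, Matrix.cons_val_zero, if_pos rfl,
      show ((0:Fin 2) = 1) = False by simp, if_false, if_true, Nat.sub_zero]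
    have hd0 : d 0 - 1 + 1 = d 0 := by
      have : d 0 ≠ 0 := hdi
      omega
    calc t₁ * (d 0 - 1) + t₂ * d 1 + t₁
        = t₁ * ((d 0 - 1) + 1) + t₂ * d 1 := by ring
      _ = s := by rw [hd0]; exact hds
  · simp only [Finsupp.tsub_apply, Finsupp.single_apply, Matrix.cons_val_one, Matrix.head_cons,
      show ((1:Fin 2) = 0) = False by simp, if_false, if_pos rfl, Nat.sub_zero]
    have hd1 : d 1 - 1 + 1 = d 1 := by
      have : d 1 ≠ 0 := hdi
      omega
    calc t₁ * d 0 + t₂ * (d 1 - 1) + t₂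
        = t₁ * d 0 + t₂ * ((d 1 - 1) + 1) := by ring
      _ = s := by rw [hd1]; exact hds
lemma isQH_of_mul_left {t₁ t₂ a b : ℕ} {f g : MvPolynomial (Fin 2) ℂ} (hf : f ≠ 0) (hg : g ≠ 0)
    (hfQH : IsQH t₁ t₂ a f) (hfg : IsQH t₁ t₂ b (f * g)) :
    ∃ c, a + c = b ∧ IsQH t₁ t₂ c g := by
  classical
  set w : Fin 2 → ℕ := ![t₁, t₂] with hw
  rw [isQH_iff] at hfQH hfg
  have hfin : (Function.support fun m => weightedHomogeneousComponent w m g).Finite :=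
    weightedHomogeneousComponent_finsupp (w := w) (φ := g)
  have hgsum : g = ∑ e ∈ hfin.toFinset, weightedHomogeneousComponent w e g := by
    conv_lhs => rw [← sum_weightedHomogeneousComponent w g]
    exact finsum_eq_sum _ hfin
  have hcomp : ∀ e, a + e ≠ b → weightedHomogeneousComponent w e g = 0 := by
    intro e he
    by_contra hne
    have heT : e ∈ hfin.toFinset := by
      simp only [Set.Finite.mem_toFinset, Function.mem_support]; exact hne
    have h1 : weightedHomogeneousComponent w (a + e) (f * g) = 0 :=
      hfg.weightedHomogeneousComponent_ne _ he
    have h2 : weightedHomogeneousComponent w (a + e) (f * g)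
        = f * weightedHomogeneousComponent w e g := by
      conv_lhs => rw [hgsum, Finset.mul_sum]
      rw [map_sum]
      rw [Finset.sum_eq_single_of_mem e heT]
      · exact IsWeightedHomogeneous.weightedHomogeneousComponent_same
          (hfQH.mul (weightedHomogeneousComponent_isWeightedHomogeneous (w:=w) (n:=e) (φ:=g)))
      · intro e' _ hne'
        exact IsWeightedHomogeneous.weightedHomogeneousComponent_ne _
          (hfQH.mul (weightedHomogeneousComponent_isWeightedHomogeneous (w:=w) (n:=e') (φ:=g)))
          (fun hcon => hne' (by omega))
    rw [h1] at h2
    exact hne ((mul_eq_zero.mp h2.symm).resolve_left hf)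
  obtain ⟨e₀, he₀⟩ : ∃ e₀, weightedHomogeneousComponent w e₀ g ≠ 0 := by
    by_contra hall
    push_neg at hall
    apply hg
    rw [hgsum]
    exact Finset.sum_eq_zero fun e _ => hall e
  have hb : a + e₀ = b := by
    by_contra hcon
    exact he₀ (hcomp e₀ hcon)
  refine ⟨e₀, hb, ?_⟩
  have hmem : e₀ ∈ hfin.toFinset := by
    simp only [Set.Finite.mem_toFinset, Function.mem_support]; exact he₀
  have hge : g = weightedHomogeneousComponent w e₀ g := by
    conv_lhs => rw [hgsum]
    exact Finset.sum_eq_single_of_mem e₀ hmem fun e _ hee => hcomp e (by omega)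
  rw [isQH_iff, hge]
  exact weightedHomogeneousComponent_isWeightedHomogeneous (w := w) (n := e₀) (φ := g)

lemma pderiv_eq_zero_of_dvd_self {t₁ t₂ s : ℕ} (ht₁ : 0 < t₁) (ht₂ : 0 < t₂) (hs : 1 ≤ s)
    {f : MvPolynomial (Fin 2) ℂ} (hf0 : f ≠ 0) (hfQH : IsQH t₁ t₂ s f) (i : Fin 2)
    (hdvd : f ∣ pderiv i f) : pderiv i f = 0 := by
  by_contra hne
  obtain ⟨g, hg⟩ := hdvd
  have hgne : g ≠ 0 := by rintro rfl; rw [mul_zero] at hg; exact hne hg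
  have hQH := isQH_pderiv hfQH i
  -- the degree of pderiv i f
  obtain ⟨m, hm⟩ : (pderiv i f).support.Nonempty := Finset.nonempty_iff_ne_empty.mpr (by rwa [Ne, MvPolynomial.support_eq_empty])
  have hms := hQH m hm
  have htle : ![t₁, t₂] i ≤ s := by omega
  have hQH' : IsQH t₁ t₂ (s - ![t₁, t₂] i) (pderiv i f) := by
    intro d hd
    have := hQH d hd
    omega
  rw [hg] at hQH'
  obtain ⟨c, hc, _⟩ := isQH_of_mul_left hf0 hgne hfQH hQH'
  have hti : 0 < ![t₁, t₂] i := by fin_cases i <;> simpa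
  omega

lemma keyA (t₁ t₂ s k' : ℕ) (ht₁ : 0 < t₁) (ht₂ : 0 < t₂) (hs : 1 ≤ s) (hk' : 1 ≤ k')
    (P Q f p : MvPolynomial (Fin 2) ℂ) (hfirr : Irreducible f)
    (hfQH : IsQH t₁ t₂ s f) (hpQH : IsQH t₁ t₂ k' p)
    (hrel : IsRelPrime P Q)
    (hfinv : f ∣ gradDot f P Q) (hdvd : f ∣ gradDot p P Q) : f ∣ p := by
  have hprime : Prime f := UniqueFactorizationMonoid.irreducible_iff_prime.mp hfirr
  have eulf := euler hfQH
  have eulp := euler hpQH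
  set fx := pderiv 0 f with hfx
  set fy := pderiv 1 f with hfy
  set px := pderiv 0 p with hpx
  set py := pderiv 1 p with hpy
  set J := px * fy - py * fx with hJ
  have h1 : f ∣ J * P := by
    have hid : J * P = fy * gradDot p P Q - py * gradDot f P Q := by
      unfold gradDot; rw [hJ, ← hfx, ← hfy, ← hpx, ← hpy]; ring
    rw [hid]
    exact dvd_sub (hdvd.mul_left _) (hfinv.mul_left _)
  have h2 : f ∣ J * Q := by
    have hid : J * Q = px * gradDot f P Q - fx * gradDot p P Q := by
      unfold gradDot; rw [hJ, ← hfx, ← hfy, ← hpx, ← hpy]; ring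
    rw [hid]
    exact dvd_sub (hfinv.mul_left _) (hdvd.mul_left _)
  have hJdvd : f ∣ J := by
    rcases hprime.dvd_or_dvd h1 with h | hP'
    · exact h
    rcases hprime.dvd_or_dvd h2 with h | hQ'
    · exact h
    exact absurd (hrel hP' hQ') hfirr.not_isUnit
  have hCk : IsUnit (C ((k' : ℕ) : ℂ) : MvPolynomial (Fin 2) ℂ) := by
    exact (IsUnit.mk0 ((k':ℕ):ℂ) (Nat.cast_ne_zero.mpr (by omega))).map C
  have h3 : f ∣ p * fx := by
    have key : C ((k' : ℕ) : ℂ) * (p * fx) = px * (C ((s : ℕ) : ℂ) * f) - C ((t₂ : ℕ) : ℂ) * X 1 * J := by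
      rw [hJ]
      linear_combination px * eulf - fx * eulp
    have : f ∣ C ((k' : ℕ) : ℂ) * (p * fx) := by
      rw [key]
      exact dvd_sub (Dvd.dvd.mul_left (dvd_mul_left f _) px) (hJdvd.mul_left _)
    exact (IsUnit.dvd_mul_left hCk).mp this
  have h4 : f ∣ p * fy := by
    have key : C ((k' : ℕ) : ℂ) * (p * fy) = py * (C ((s : ℕ) : ℂ) * f) + C ((t₁ : ℕ) : ℂ) * X 0 * J := by
      rw [hJ]
      linear_combination py * eulf - fy * eulp
    have : f ∣ C ((k' : ℕ) : ℂ) * (p * fy) := by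
      rw [key]
      exact dvd_add (Dvd.dvd.mul_left (dvd_mul_left f _) py) (hJdvd.mul_left _)
    exact (IsUnit.dvd_mul_left hCk).mp this
  by_cases hp : f ∣ p
  · exact hp
  have hdfx : f ∣ fx := (hprime.dvd_or_dvd h3).resolve_left hp
  have hdfy : f ∣ fy := (hprime.dvd_or_dvd h4).resolve_left hp
  have hfx0 : fx = 0 := pderiv_eq_zero_of_dvd_self ht₁ ht₂ hs hfirr.ne_zero hfQH 0 hdfx
  have hfy0 : fy = 0 := pderiv_eq_zero_of_dvd_self ht₁ ht₂ hs hfirr.ne_zero hfQH 1 hdfy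
  exfalso
  apply hfirr.ne_zero
  have : C ((s : ℕ) : ℂ) * f = 0 := by rw [← eulf, hfx0, hfy0]; ring
  have hsne : (C ((s : ℕ) : ℂ) : MvPolynomial (Fin 2) ℂ) ≠ 0 := by
    rw [Ne, MvPolynomial.C_eq_zero]
    exact Nat.cast_ne_zero.mpr (by omega)
  exact (mul_eq_zero.mp this).resolve_left hsne

lemma isQH_pow {t₁ t₂ s : ℕ} {f : MvPolynomial (Fin 2) ℂ} (hf : IsQH t₁ t₂ s f) (m : ℕ) :
    IsQH t₁ t₂ (m * s) (f ^ m) := by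
  induction m with
  | zero =>
      rw [isQH_iff]
      simpa using isWeightedHomogeneous_one (R := ℂ) (w := ![t₁, t₂])
  | succ r ih =>
      have h2 := (isQH_iff.mp ih).mul (isQH_iff.mp hf)
      rw [isQH_iff, pow_succ, show (r + 1) * s = r * s + s from by ring]
      exact h2

/-- If `F_n = (P,Q)` is an irreducible quasi-homogeneous vector field, `f` an
irreducible quasi-homogeneous invariant curve of `F_n` with cofactor `K_n`,
`p` quasi-homogeneous of degree `k`, and for each `j = 1,…,m−1` the vector
field `F_n + (j/(k−js))·K_n·D₀` is irreducible (with `k ≠ js`), then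
`f^m ∣ ∇p·F_n` implies `f^m ∣ p`. -/
theorem power_invariant_curve_divides_of_divides_gradDot
    (t₁ t₂ : ℕ) (ht₁ : 0 < t₁) (ht₂ : 0 < t₂) (n s k m : ℕ)
    (hs : 1 ≤ s) (hk : 1 ≤ k) (hm : 1 ≤ m)
    (P Q : MvPolynomial (Fin 2) ℂ)
    (hP : IsQH t₁ t₂ (n + t₁) P) (hQ : IsQH t₁ t₂ (n + t₂) Q)
    (hirrF : IsRelPrime P Q)
    (f : MvPolynomial (Fin 2) ℂ) (hfirr : Irreducible f)
    (hfQH : IsQH t₁ t₂ s f) (hf0 : constantCoeff f = 0)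
    (Kn : MvPolynomial (Fin 2) ℂ) (hKn : IsQH t₁ t₂ n Kn)
    (hinv : gradDot f P Q = Kn * f)
    (hirrj : ∀ j : ℕ, 1 ≤ j → j ≤ m - 1 →
      k ≠ j * s ∧
      IsRelPrime
        (P + C ((j : ℂ) / ((k : ℂ) - (j : ℂ) * (s : ℂ))) * Kn * (C (t₁ : ℂ) * X 0))
        (Q + C ((j : ℂ) / ((k : ℂ) - (j : ℂ) * (s : ℂ))) * Kn * (C (t₂ : ℂ) * X 1)))
    (p : MvPolynomial (Fin 2) ℂ) (hp : IsQH t₁ t₂ k p)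
    (hdvd : f ^ m ∣ gradDot p P Q) :
    f ^ m ∣ p := by
  revert hirrj hdvd
  induction m, hm using Nat.le_induction with
  | base =>
      intro hirrj hdvd
      rw [pow_one] at hdvd ⊢
      exact keyA t₁ t₂ s k ht₁ ht₂ hs hk P Q f p hfirr hfQH hp hirrF
        ⟨Kn, by rw [hinv, mul_comm]⟩ hdvd
  | succ m hm ih =>
      intro hirrj hdvd
      have hinvE : pderiv 0 f * P + pderiv 1 f * Q = Kn * f := hinv
      obtain ⟨hkne, hrel'⟩ := hirrj m hm (by omega)
      have hirrj_m : ∀ j : ℕ, 1 ≤ j → j ≤ m - 1 →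
          k ≠ j * s ∧
          IsRelPrime
            (P + C ((j : ℂ) / ((k : ℂ) - (j : ℂ) * (s : ℂ))) * Kn * (C (t₁ : ℂ) * X 0))
            (Q + C ((j : ℂ) / ((k : ℂ) - (j : ℂ) * (s : ℂ))) * Kn * (C (t₂ : ℂ) * X 1)) :=
        fun j h1 h2 => hirrj j h1 (by omega)
      have hmd : f ^ m ∣ gradDot p P Q := dvd_trans (pow_dvd_pow f (Nat.le_succ m)) hdvd
      obtain ⟨q, hq⟩ := ih hirrj_m hmd
      by_cases hq0 : q = 0
      · rw [hq, hq0, mul_zero]; exact dvd_zero _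
      obtain ⟨r, rfl⟩ : ∃ r, m = r + 1 := ⟨m - 1, by omega⟩
      have hfm0 : f ^ (r + 1) ≠ 0 := pow_ne_zero _ hfirr.ne_zero
      have hpm : IsQH t₁ t₂ ((r + 1) * s) (f ^ (r + 1)) := isQH_pow hfQH (r + 1)
      have hpQH' : IsQH t₁ t₂ k (f ^ (r + 1) * q) := by rw [← hq]; exact hp
      obtain ⟨c, hc, hqQH⟩ := isQH_of_mul_left hfm0 hq0 hpm hpQH'
      have hc1 : 1 ≤ c := by
        rcases Nat.eq_zero_or_pos c with h | h
        · exact absurd (by omega : k = (r + 1) * s) hkne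
        · exact h
      have hgrad : gradDot p P Q
          = f ^ (r + 1) * (gradDot q P Q + C (((r + 1 : ℕ) : ℂ)) * (Kn * q)) := by
        rw [hq]
        unfold gradDot
        rw [pderiv_mul, pderiv_mul, pderiv_pow, pderiv_pow]
        simp only [Nat.add_sub_cancel, map_natCast (C : ℂ →+* MvPolynomial (Fin 2) ℂ)]
        push_cast
        linear_combination (((r : MvPolynomial (Fin 2) ℂ) + 1) * f ^ r * q) * hinvE
      have hA : f ∣ gradDot q P Q + C (((r + 1 : ℕ) : ℂ)) * (Kn * q) := by
        have h := hdvd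
        rw [hgrad, pow_succ] at h
        exact (mul_dvd_mul_iff_left hfm0).mp h
      have eulq := euler hqQH
      have hcast : (k : ℂ) - ((r + 1 : ℕ) : ℂ) * (s : ℂ) = (c : ℂ) := by
        have hk' : (((r + 1) * s + c : ℕ) : ℂ) = (k : ℂ) := by rw [hc]
        push_cast at hk' ⊢
        linear_combination -hk'
      have hcne : (c : ℂ) ≠ 0 := Nat.cast_ne_zero.mpr (by omega)
      have hγc : C (((r + 1 : ℕ) : ℂ) / ((k : ℂ) - ((r + 1 : ℕ) : ℂ) * (s : ℂ)))
          * C ((c : ℕ) : ℂ) = (C (((r + 1 : ℕ) : ℂ)) : MvPolynomial (Fin 2) ℂ) := by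
        rw [← map_mul]
        congr 1
        rw [hcast]
        field_simp
      have hgradq : gradDot q
            (P + C (((r + 1 : ℕ) : ℂ) / ((k : ℂ) - ((r + 1 : ℕ) : ℂ) * (s : ℂ))) * Kn
              * (C (t₁ : ℂ) * X 0))
            (Q + C (((r + 1 : ℕ) : ℂ) / ((k : ℂ) - ((r + 1 : ℕ) : ℂ) * (s : ℂ))) * Kn
              * (C (t₂ : ℂ) * X 1))
          = gradDot q P Q + C (((r + 1 : ℕ) : ℂ)) * (Kn * q) := by
        unfold gradDot
        linear_combination
          (C (((r + 1 : ℕ) : ℂ) / ((k : ℂ) - ((r + 1 : ℕ) : ℂ) * (s : ℂ))) * Kn) * eulq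
            + (Kn * q) * hγc
      have hfinv' : f ∣ gradDot f
            (P + C (((r + 1 : ℕ) : ℂ) / ((k : ℂ) - ((r + 1 : ℕ) : ℂ) * (s : ℂ))) * Kn
              * (C (t₁ : ℂ) * X 0))
            (Q + C (((r + 1 : ℕ) : ℂ) / ((k : ℂ) - ((r + 1 : ℕ) : ℂ) * (s : ℂ))) * Kn
              * (C (t₂ : ℂ) * X 1)) := by
        have eulf := euler hfQH
        have hid : gradDot f
              (P + C (((r + 1 : ℕ) : ℂ) / ((k : ℂ) - ((r + 1 : ℕ) : ℂ) * (s : ℂ))) * Kn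
                * (C (t₁ : ℂ) * X 0))
              (Q + C (((r + 1 : ℕ) : ℂ) / ((k : ℂ) - ((r + 1 : ℕ) : ℂ) * (s : ℂ))) * Kn
                * (C (t₂ : ℂ) * X 1))
            = (Kn + C (((r + 1 : ℕ) : ℂ) / ((k : ℂ) - ((r + 1 : ℕ) : ℂ) * (s : ℂ))) * Kn
                * C ((s : ℕ) : ℂ)) * f := by
          unfold gradDot
          linear_combination
            (C (((r + 1 : ℕ) : ℂ) / ((k : ℂ) - ((r + 1 : ℕ) : ℂ) * (s : ℂ))) * Kn) * eulf + hinvE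
        rw [hid]
        exact dvd_mul_left f _
      have hfq : f ∣ q :=
        keyA t₁ t₂ s c ht₁ ht₂ hs hc1 _ _ f q hfirr hfQH hqQH hrel' hfinv' (by
          rw [hgradq]; exact hA)
      obtain ⟨u, hu⟩ := hfq
      exact ⟨u, by rw [hq, hu, pow_succ]; ring⟩
end
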